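/- For (q, p) ∈ ℍⁿ × ℍ with |q|² + |p|² = 1 and p ≠ -1, setting p' = (1+p)⁻¹(1-p) one has Re(p') = |q|²/|1+p|², so that the Cayley transform point (q', p') with q' = (1+p)⁻¹q satisfies Re(p') = |q'|². -/

import Mathlib

open scoped Quaternion

/-- For `(q,p) ∈ ℍⁿ × ℍ` with `|q|² + |p|² = 1` and `p ≠ -1`, the quaternion
`p' = (1+p)⁻¹(1-p)` satisfies `Re p' = |q|²/|1+p|²`, so the Cayley transform image
`(q',p')` with `q' = (1+p)⁻¹ q` satisfies `Re p' = |q'|²`. -/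
theorem cayley_real_part {n : ℕ} (q : Fin n → ℍ[ℝ]) (p : ℍ[ℝ])
    (hS : (∑ α, Quaternion.normSq (q α)) + Quaternion.normSq p = 1)
    (hp : p ≠ -1) :
    ((1 + p)⁻¹ * (1 - p)).re =
      (∑ α, Quaternion.normSq (q α)) / Quaternion.normSq (1 + p) ∧
    ((1 + p)⁻¹ * (1 - p)).re = ∑ α, Quaternion.normSq ((1 + p)⁻¹ * q α) := by
  have h0 : (1 + p) ≠ 0 := by
    intro h
    exact hp (by rw [add_comm] at h; exact eq_neg_of_add_eq_zero_left h)
  have hns : Quaternion.normSq (1 + p) ≠ 0 := by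
    simpa using h0
  have hsum : (∑ α, Quaternion.normSq (q α)) = 1 - Quaternion.normSq p := by
    linarith
  have hre : ((1 + p)⁻¹ * (1 - p)).re =
      (∑ α, Quaternion.normSq (q α)) / Quaternion.normSq (1 + p) := by
    rw [hsum, Quaternion.inv_def, Quaternion.normSq_def'] at *
    simp only [Quaternion.re_smul, Quaternion.imI_smul, Quaternion.imJ_smul,
      Quaternion.imK_smul, smul_eq_mul, Quaternion.re_mul,
      Quaternion.normSq_def', Quaternion.re_star, Quaternion.imI_star,
      Quaternion.imJ_star, Quaternion.imK_star, Quaternion.re_add,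
      Quaternion.imI_add, Quaternion.imJ_add, Quaternion.imK_add,
      Quaternion.re_sub, Quaternion.imI_sub, Quaternion.imJ_sub,
      Quaternion.imK_sub, Quaternion.re_one, Quaternion.imI_one,
      Quaternion.imJ_one, Quaternion.imK_one]
    field_simp
    ring
  refine ⟨hre, hre.trans ?_⟩
  rw [eq_comm]
  calc ∑ α, Quaternion.normSq ((1 + p)⁻¹ * q α)
      = ∑ α, (Quaternion.normSq (1 + p))⁻¹ * Quaternion.normSq (q α) := by
        simp [map_mul, map_inv₀]
    _ = (∑ α, Quaternion.normSq (q α)) / Quaternion.normSq (1 + p) := by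
        rw [← Finset.mul_sum]
        field_simp
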